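/- Let 𝒦 be a field equipped with a function ν : 𝒦 → ℝ ∪ {−∞} such that ν(0) = −∞, ν(λμ) = ν(λ) + ν(μ), and ν(λ + μ) ≤ max(ν(λ), ν(μ)) (a non-Archimedean valuation written additively). Let V be a finite-dimensional 𝒦-vector space with basis x₁, …, x_n and filter values F(x₁), …, F(x_n) ∈ ℝ that are 'generic': F(x_i) − F(x_j) is not in the value group ν(𝒦 \ {0}) for i ≠ j. Extend F to V by F(Σ λⱼ xⱼ) = max over j with λⱼ ≠ 0 of (ν(λⱼ) + F(xⱼ)). Call e ∈ V normalized if e = x_p + r where r is a combination of the other basis vectors with F(r) < F(x_p), and call a system e₁, …, e_m normal if each e_i is normalized with pairwise distinct leading indices. Then for any normal system e₁, …, e_m and any scalars λ₁, …, λ_m ∈ 𝒦: F(Σᵢ λᵢ eᵢ) = maxᵢ F(λᵢ eᵢ). -/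

import Mathlib

private lemma aux_nu_sum {K : Type*} [Field K] (ν : K → WithBot ℝ) (hν0 : ν 0 = ⊥)
    (hνadd : ∀ a b : K, ν (a + b) ≤ max (ν a) (ν b))
    {ι : Type*} (s : Finset ι) (f : ι → K) :
    ν (∑ i ∈ s, f i) ≤ s.sup (fun i => ν (f i)) := by
  induction s using Finset.cons_induction with
  | empty => simp [hν0]
  | cons a s ha ih =>
    rw [Finset.sum_cons, Finset.sup_cons]
    exact le_trans (hνadd _ _) (max_le_max le_rfl ih)

/-- The filter of a linear combination of a normal system equals the maximum of the
filters of its terms. Here `K` is a field with a non-Archimedean valuation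
`ν : K → WithBot ℝ`, the vector space `V` is modeled by coordinates `Fin n → K` in the
preferred basis, `F` is a generic filter, and the extended filter of `v` is
`max_j (ν (v j) + F j)` (computed in `WithBot ℝ`). -/
theorem filter_of_normal_combination {K : Type*} [Field K] (ν : K → WithBot ℝ)
    (hν0 : ν 0 = ⊥)
    (hνmul : ∀ a b : K, ν (a * b) = ν a + ν b)
    (hνadd : ∀ a b : K, ν (a + b) ≤ max (ν a) (ν b))
    {n : ℕ} (F : Fin n → ℝ)
    (hgen : ∀ i j : Fin n, i ≠ j → ∀ a : K, a ≠ 0 →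
      ν a ≠ ((F i - F j : ℝ) : WithBot ℝ))
    {m : ℕ} (e : Fin m → (Fin n → K)) (p : Fin m → Fin n)
    (hp : Function.Injective p)
    (hlead : ∀ i, e i (p i) = 1)
    (hsmall : ∀ i j, j ≠ p i → ν (e i j) + (F j : WithBot ℝ) < (F (p i) : WithBot ℝ))
    (lam : Fin m → K) :
    (Finset.univ.sup fun j : Fin n => ν ((∑ i, lam i • e i) j) + (F j : WithBot ℝ)) =
      Finset.univ.sup fun i : Fin m =>
        Finset.univ.sup fun j : Fin n => ν ((lam i • e i) j) + (F j : WithBot ℝ) := by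
  classical
  have h1 : ν 1 + ν 1 = ν 1 := by rw [← hνmul, one_mul]
  by_cases hbot : ν 1 = ⊥
  · have hall : ∀ a : K, ν a = ⊥ := fun a => by
      have h := hνmul a 1
      rw [mul_one, hbot] at h
      simpa using h
    simp [hall]
  have h1' : ν 1 = 0 := by
    obtain ⟨r, hr⟩ := WithBot.ne_bot_iff_exists.mp hbot
    rw [← hr] at h1 ⊢
    norm_cast at h1 ⊢
    linarith
  have hne : ∀ a : K, a ≠ 0 → ν a ≠ ⊥ := by
    intro a ha hb
    have h := hνmul a a⁻¹
    rw [mul_inv_cancel₀ ha, h1', hb] at h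
    simp at h
  have hneg : ∀ a : K, ν (-a) = ν a := by
    have hm1 : ν (-1 : K) = 0 := by
      have h2 : ν (-1 : K) + ν (-1) = 0 := by
        rw [← hνmul, neg_one_mul, neg_neg, h1']
      obtain ⟨r, hr⟩ := WithBot.ne_bot_iff_exists.mp (hne (-1 : K) (by norm_num))
      rw [← hr] at h2 ⊢
      norm_cast at h2 ⊢
      linarith
    intro a
    rw [show -a = -1 * a by ring, hνmul, hm1, zero_add]
  have hult : ∀ a b : K, ν b < ν a → ν (a + b) = ν a := by
    intro a b hba
    refine le_antisymm (le_trans (hνadd a b) (by rw [max_eq_left hba.le])) ?_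
    by_contra hlt
    push_neg at hlt
    have h2 : ν a ≤ max (ν (a + b)) (ν b) := by
      have h3 := hνadd (a + b) (-b)
      rw [add_neg_cancel_right, hneg] at h3
      exact h3
    exact absurd h2 (not_le.mpr (max_lt hlt hba))
  set g : Fin m → WithBot ℝ := fun i => ν (lam i) + (F (p i) : WithBot ℝ) with hg
  have hA : ∀ i, (Finset.univ.sup fun j => ν ((lam i • e i) j) + (F j : WithBot ℝ)) = g i := by
    intro i
    apply le_antisymm
    · apply Finset.sup_le
      intro j _
      have hsm : (lam i • e i) j = lam i * e i j := rfl
      rw [hsm, hνmul]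
      by_cases hj : j = p i
      · subst hj
        rw [hlead, h1', add_zero]
      · calc ν (lam i) + ν (e i j) + (F j : WithBot ℝ)
            = ν (lam i) + (ν (e i j) + (F j : WithBot ℝ)) := by rw [add_assoc]
          _ ≤ ν (lam i) + (F (p i) : WithBot ℝ) := add_le_add_right (hsmall i j hj).le _
    · have hle := Finset.le_sup (f := fun j => ν ((lam i • e i) j) + (F j : WithBot ℝ))
        (Finset.mem_univ (p i))
      have heq : ν ((lam i • e i) (p i)) + (F (p i) : WithBot ℝ) = g i := by
        show ν (lam i * e i (p i)) + _ = _
        rw [hlead, mul_one]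
      exact le_trans heq.ge (Finset.le_sup
        (f := fun j : Fin n => ν ((lam i • e i) j) + (F j : WithBot ℝ))
        (Finset.mem_univ (p i)))
  rw [show (Finset.univ.sup fun i : Fin m =>
      Finset.univ.sup fun j => ν ((lam i • e i) j) + (F j : WithBot ℝ)) = Finset.univ.sup g from
    Finset.sup_congr rfl (fun i _ => hA i)]
  apply le_antisymm
  · apply Finset.sup_le
    intro j _
    have hsum : (∑ i, lam i • e i) j = ∑ i, lam i * e i j := by
      simp [Finset.sum_apply]
    rw [hsum]
    have h2 := aux_nu_sum ν hν0 hνadd Finset.univ (fun i => lam i * e i j)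
    refine le_trans (add_le_add_left h2 _) ?_
    rcases Finset.eq_empty_or_nonempty (Finset.univ : Finset (Fin m)) with h | h
    · simp [h]
    · obtain ⟨i, _, hi⟩ := Finset.exists_mem_eq_sup _ h (fun i => ν (lam i * e i j))
      rw [hi]
      refine le_trans ?_ (Finset.le_sup (Finset.mem_univ i))
      rw [hνmul]
      by_cases hj : j = p i
      · subst hj
        rw [hlead, h1', add_zero]
      · rw [add_assoc]
        exact add_le_add_right (hsmall i j hj).le _
  · by_cases hz : ∀ i, lam i = 0
    · apply Finset.sup_le
      intro i _
      simp [hg, hz i, hν0]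
    · push_neg at hz
      set S : Finset (Fin m) := Finset.univ.filter (fun i => lam i ≠ 0) with hS
      have hSne : S.Nonempty := by
        obtain ⟨i, hi⟩ := hz
        exact ⟨i, by simp [hS, hi]⟩
      obtain ⟨i₀, hi₀S, hi₀⟩ := Finset.exists_mem_eq_sup S hSne g
      have hlam₀ : lam i₀ ≠ 0 := by simpa [hS] using hi₀S
      have hν₀ : ν (lam i₀) ≠ ⊥ := hne _ hlam₀
      have hsup_le : Finset.univ.sup g ≤ g i₀ := by
        apply Finset.sup_le
        intro i _
        by_cases hli : lam i = 0
        · simp [hg, hli, hν0]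
        · exact hi₀ ▸ Finset.le_sup (by simp [hS, hli])
      have hstrict : ∀ i, i ≠ i₀ → lam i ≠ 0 → g i < g i₀ := by
        intro i hii hli
        have hle : g i ≤ g i₀ := hi₀ ▸ Finset.le_sup (by simp [hS, hli])
        rcases lt_or_eq_of_le hle with h | h
        · exact h
        · exfalso
          obtain ⟨a, ha⟩ := WithBot.ne_bot_iff_exists.mp (hne _ hli)
          obtain ⟨b, hb⟩ := WithBot.ne_bot_iff_exists.mp hν₀
          have hreal : a + F (p i) = b + F (p i₀) := by
            have h' : ν (lam i) + (F (p i) : WithBot ℝ) = ν (lam i₀) + (F (p i₀) : WithBot ℝ) := h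
            rw [← ha, ← hb] at h'
            exact_mod_cast h'
          have hinv : ν (lam i₀)⁻¹ = ((-b : ℝ) : WithBot ℝ) := by
            have h2 : ν (lam i₀) + ν (lam i₀)⁻¹ = 0 := by
              rw [← hνmul, mul_inv_cancel₀ hlam₀, h1']
            obtain ⟨c, hc⟩ := WithBot.ne_bot_iff_exists.mp (hne _ (inv_ne_zero hlam₀))
            rw [← hb, ← hc] at h2
            rw [← hc]
            norm_cast at h2 ⊢
            linarith
          have hval : ν (lam i * (lam i₀)⁻¹) = ((F (p i₀) - F (p i) : ℝ) : WithBot ℝ) := by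
            rw [hνmul, ← ha, hinv]
            norm_cast
            linarith
          exact hgen (p i₀) (p i) (fun hpe => hii (hp hpe).symm) _
            (mul_ne_zero hli (inv_ne_zero hlam₀)) hval
      have hcoord : ν ((∑ i, lam i • e i) (p i₀)) = ν (lam i₀) := by
        have hsum : (∑ i, lam i • e i) (p i₀) = ∑ i, lam i * e i (p i₀) := by
          simp [Finset.sum_apply]
        rw [hsum, ← Finset.add_sum_erase _ _ (Finset.mem_univ i₀), hlead, mul_one]
        apply hult
        refine lt_of_le_of_lt (aux_nu_sum ν hν0 hνadd _ _) ?_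
        rw [Finset.sup_lt_iff (Ne.bot_lt hν₀)]
        intro i hi
        have hii : i ≠ i₀ := (Finset.mem_erase.mp hi).1
        by_cases hli : lam i = 0
        · rw [hli, zero_mul, hν0]
          exact Ne.bot_lt hν₀
        · rw [hνmul]
          have hppi : p i₀ ≠ p i := fun hpe => hii (hp hpe).symm
          have h3 : ν (e i (p i₀)) + (F (p i₀) : WithBot ℝ) < (F (p i) : WithBot ℝ) :=
            hsmall i (p i₀) hppi
          have h4 : ν (lam i) + (F (p i) : WithBot ℝ) < ν (lam i₀) + (F (p i₀) : WithBot ℝ) :=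
            hstrict i hii hli
          have h5 : ν (lam i) + ν (e i (p i₀)) + (F (p i₀) : WithBot ℝ)
              < ν (lam i₀) + (F (p i₀) : WithBot ℝ) := by
            calc ν (lam i) + ν (e i (p i₀)) + (F (p i₀) : WithBot ℝ)
                = ν (lam i) + (ν (e i (p i₀)) + (F (p i₀) : WithBot ℝ)) := by rw [add_assoc]
              _ < ν (lam i) + (F (p i) : WithBot ℝ) := WithBot.add_lt_add_left (hne _ hli) h3
              _ < ν (lam i₀) + (F (p i₀) : WithBot ℝ) := h4
          exact (WithBot.add_lt_add_iff_right (WithBot.coe_ne_bot)).mp h5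
      calc Finset.univ.sup g ≤ g i₀ := hsup_le
        _ = ν ((∑ i, lam i • e i) (p i₀)) + (F (p i₀) : WithBot ℝ) := by
            rw [hg]; simp only []; rw [hcoord]
        _ ≤ _ := Finset.le_sup
            (f := fun j : Fin n => ν ((∑ i, lam i • e i) j) + (F j : WithBot ℝ))
            (Finset.mem_univ (p i₀))
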